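/- In the MP mechanism, the selection rule S* = argmin_{S∈F} b(S)·2^{|S|−1} is monotone in each bid: if agent e wins with bid b_e, she also wins with any bid b'_e < b_e (all other bids fixed). Consequently each winner's payment equals her threshold bid, and bidding the true cost is a dominant strategy for single-element agents who do not self-divide. -/

import Mathlib

/-- Monotonicity of the MP selection rule: if a set containing `e` minimizes
`b(S)·2^{|S|−1}`, then after lowering `e`'s bid by `δ > 0`, some set containing `e`
minimizes the modified objective. -/
theorem mp_selection_monotone {α : Type*} [DecidableEq α]
    (F : Finset (Finset α)) (b : α → ℝ) (e : α) (δ : ℝ) (hδ : 0 < δ)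
    (Sstar : Finset α) (hSstar : Sstar ∈ F) (heS : e ∈ Sstar)
    (hmin : ∀ T ∈ F,
      (∑ a ∈ Sstar, b a) * (2 : ℝ) ^ ((Sstar.card : ℤ) - 1) ≤
        (∑ a ∈ T, b a) * (2 : ℝ) ^ ((T.card : ℤ) - 1)) :
    ∃ S' ∈ F, e ∈ S' ∧ ∀ T ∈ F,
      (∑ a ∈ S', Function.update b e (b e - δ) a) * (2 : ℝ) ^ ((S'.card : ℤ) - 1) ≤
        (∑ a ∈ T, Function.update b e (b e - δ) a) * (2 : ℝ) ^ ((T.card : ℤ) - 1) := by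
  set b' : α → ℝ := Function.update b e (b e - δ) with hb'
  set g : Finset α → ℝ := fun S => (∑ a ∈ S, b' a) * (2 : ℝ) ^ ((S.card : ℤ) - 1) with hg
  -- new sum of a set containing e is old sum minus δ
  have hsum_mem : ∀ S : Finset α, e ∈ S → (∑ a ∈ S, b' a) = (∑ a ∈ S, b a) - δ := by
    intro S heS'
    rw [← Finset.add_sum_erase _ _ heS', ← Finset.add_sum_erase _ _ heS']
    have h1 : b' e = b e - δ := Function.update_self _ _ _
    have h2 : ∑ a ∈ S.erase e, b' a = ∑ a ∈ S.erase e, b a := by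
      refine Finset.sum_congr rfl fun a ha => ?_
      exact Function.update_of_ne (Finset.ne_of_mem_erase ha) _ _
    rw [h1, h2]; ring
  have hsum_not : ∀ S : Finset α, e ∉ S → (∑ a ∈ S, b' a) = (∑ a ∈ S, b a) := by
    intro S heS'
    refine Finset.sum_congr rfl fun a ha => ?_
    exact Function.update_of_ne (by rintro rfl; exact heS' ha) _ _
  -- pick minimizer of g over sets in F containing e
  obtain ⟨S', hS'mem, hS'min⟩ := Finset.exists_min_image (F.filter (fun S => e ∈ S)) g
    ⟨Sstar, Finset.mem_filter.mpr ⟨hSstar, heS⟩⟩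
  obtain ⟨hS'F, heS'⟩ := Finset.mem_filter.mp hS'mem
  refine ⟨S', hS'F, heS', fun T hT => ?_⟩
  by_cases heT : e ∈ T
  · exact hS'min T (Finset.mem_filter.mpr ⟨hT, heT⟩)
  · have h1 : g S' ≤ g Sstar := hS'min Sstar (Finset.mem_filter.mpr ⟨hSstar, heS⟩)
    have hpow : (0 : ℝ) < (2 : ℝ) ^ ((Sstar.card : ℤ) - 1) := by positivity
    have h2 : g Sstar ≤ (∑ a ∈ Sstar, b a) * (2 : ℝ) ^ ((Sstar.card : ℤ) - 1) := by
      simp only [hg, hsum_mem Sstar heS]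
      nlinarith
    have h3 := hmin T hT
    have h4 : g T = (∑ a ∈ T, b a) * (2 : ℝ) ^ ((T.card : ℤ) - 1) := by
      simp only [hg, hsum_not T heT]
    simp only [hg] at h1 h2 ⊢
    rw [hsum_not T heT]
    linarith
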